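/- Let K be a rigid field containing a primitive 4th root of unity (i.e., for every non-square k ∈ K*, the form ⟨1, k⟩ represents only the square classes [1] and [k]). If a, b ∈ K* have square classes [a], [b] linearly independent over F₂ in K*/(K*)², then the 2-fold Pfister form ⟨⟨a, b⟩⟩ = ⟨1,a⟩ ⊗ ⟨1,b⟩ is anisotropic. -/

import Mathlib

private lemma aux_isotropic {K : Type*} [Field K] (i : K) (hi : i ^ 2 = -1)
    {a : K} (hna : ¬ IsSquare a) {x y : K} (h : x ^ 2 + a * y ^ 2 = 0) :
    x = 0 ∧ y = 0 := by
  by_cases hy : y = 0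
  · subst hy
    refine ⟨?_, rfl⟩
    have : x ^ 2 = 0 := by linear_combination h
    exact pow_eq_zero_iff (n := 2) (by norm_num) |>.mp this
  · exact absurd ⟨i * x / y, by field_simp; linear_combination h - x ^ 2 * hi⟩ hna

/-- Let `K` be a rigid field containing a primitive 4th root of unity: for every
non-square `k ∈ K*`, every nonzero value of the form `⟨1, k⟩` lies in the square class
of `1` or of `k`.  If `a, b ∈ K*` have square classes linearly independent over `𝔽₂`
(i.e. `a`, `b` and `a·b` are all non-squares), then the 2-fold Pfister form
`⟨⟨a, b⟩⟩ = ⟨1, a, b, a·b⟩` is anisotropic. -/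
theorem pfister_anisotropic_of_rigid {K : Type*} [Field K]
    (h2 : (2 : K) ≠ 0) (i : K) (hi : i ^ 2 = -1)
    (hrigid : ∀ k : K, k ≠ 0 → ¬ IsSquare k →
      ∀ x y : K, x ^ 2 + k * y ^ 2 ≠ 0 →
        (∃ c : K, x ^ 2 + k * y ^ 2 = c ^ 2) ∨
        (∃ c : K, x ^ 2 + k * y ^ 2 = k * c ^ 2))
    (a b : K) (ha : a ≠ 0) (hb : b ≠ 0)
    (hna : ¬ IsSquare a) (hnb : ¬ IsSquare b) (hnab : ¬ IsSquare (a * b)) :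
    ∀ x y z w : K, x ^ 2 + a * y ^ 2 + b * z ^ 2 + a * b * w ^ 2 = 0 →
      x = 0 ∧ y = 0 ∧ z = 0 ∧ w = 0 := by
  intro x y z w h
  have hPQ : (x ^ 2 + a * y ^ 2) + b * (z ^ 2 + a * w ^ 2) = 0 := by linear_combination h
  by_cases hQ : z ^ 2 + a * w ^ 2 = 0
  · have hP : x ^ 2 + a * y ^ 2 = 0 := by linear_combination hPQ - b * hQ
    obtain ⟨hx, hy⟩ := aux_isotropic i hi hna hP
    obtain ⟨hz, hw⟩ := aux_isotropic i hi hna hQ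
    exact ⟨hx, hy, hz, hw⟩
  · exfalso
    have hP : x ^ 2 + a * y ^ 2 ≠ 0 := by
      intro h0
      apply hQ
      have : b * (z ^ 2 + a * w ^ 2) = 0 := by linear_combination hPQ - h0
      exact (mul_eq_zero.mp this).resolve_left hb
    rcases hrigid a ha hna x y hP with ⟨c, hc⟩ | ⟨c, hc⟩ <;>
      rcases hrigid a ha hna z w hQ with ⟨d, hd⟩ | ⟨d, hd⟩ <;>
      have hd0 : d ≠ 0 := fun h0 => hQ (by rw [hd, h0]; ring)
    · -- P = c², Q = d² : b is a square
      have key : b * d ^ 2 = -c ^ 2 := by linear_combination hPQ - hc - b * hd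
      exact hnb ⟨i * c / d, by field_simp; linear_combination key - c ^ 2 * hi⟩
    · -- P = c², Q = a·d² : a·b is a square
      have key : b * (a * d ^ 2) = -c ^ 2 := by linear_combination hPQ - hc - b * hd
      exact hnab ⟨i * c / d, by field_simp; linear_combination key - c ^ 2 * hi⟩
    · -- P = a·c², Q = d² : a·b is a square
      have key : b * d ^ 2 = -(a * c ^ 2) := by linear_combination hPQ - hc - b * hd
      exact hnab ⟨i * a * c / d, by
        field_simp; linear_combination key - a * c ^ 2 * hi⟩
    · -- P = a·c², Q = a·d² : b is a square
      have key : b * (a * d ^ 2) = -(a * c ^ 2) := by linear_combination hPQ - hc - b * hd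
      have key2 : b * d ^ 2 = -c ^ 2 :=
        mul_left_cancel₀ ha (by linear_combination key)
      exact hnb ⟨i * c / d, by field_simp; linear_combination key2 - c ^ 2 * hi⟩
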